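/- (Continuous-time positive comparison principle.) Let M ∈ ℝ^{n×n} be Metzler and Hurwitz (every eigenvalue of M has strictly negative real part), and let ε : [0,∞) → ℝⁿ be differentiable with ε_t ≥ 0 and dε_t/dt ≤ M ε_t componentwise for all t ≥ 0. Then ε_t → 0 as t → ∞. -/

import Mathlib

open Matrix

/-- Entrywise positive part `M⁺ = max(M,0)`. -/
noncomputable def entPos {p n : ℕ} (M : Matrix (Fin p) (Fin n) ℝ) : Matrix (Fin p) (Fin n) ℝ :=
  Matrix.of fun i j => max (M i j) 0

/-- Entrywise negative part `M⁻ = M⁺ - M`. -/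
noncomputable def entNeg {p n : ℕ} (M : Matrix (Fin p) (Fin n) ℝ) : Matrix (Fin p) (Fin n) ℝ :=
  entPos M - M

/-- Entrywise absolute value `|M| = M⁺ + M⁻`. -/
noncomputable def entAbs {p n : ℕ} (M : Matrix (Fin p) (Fin n) ℝ) : Matrix (Fin p) (Fin n) ℝ :=
  entPos M + entNeg M

/-- `M^d`: the diagonal matrix with the same diagonal as `M`. -/
def diagPart {n : ℕ} (M : Matrix (Fin n) (Fin n) ℝ) : Matrix (Fin n) (Fin n) ℝ :=
  Matrix.diagonal fun i => M i i

/-- `M^{nd} = M - M^d`. -/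
def offDiagPart {n : ℕ} (M : Matrix (Fin n) (Fin n) ℝ) : Matrix (Fin n) (Fin n) ℝ := M - diagPart M

/-- `M^m = M^d + |M^{nd}|`. -/
noncomputable def metzPart {n : ℕ} (M : Matrix (Fin n) (Fin n) ℝ) : Matrix (Fin n) (Fin n) ℝ :=
  diagPart M + entAbs (offDiagPart M)

/-- A square real matrix is Metzler if all off-diagonal entries are nonnegative. -/
def Metzler {n : ℕ} (M : Matrix (Fin n) (Fin n) ℝ) : Prop := ∀ i j, i ≠ j → 0 ≤ M i j

/-- `gd` is a (discrete-time mixed-monotone) decomposition function of `g`. -/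
def IsDecompositionFunction {n p : ℕ} (g : (Fin n → ℝ) → Fin p → ℝ)
    (gd : (Fin n → ℝ) → (Fin n → ℝ) → Fin p → ℝ) : Prop :=
  (∀ x, gd x x = g x) ∧
  (∀ x x' x₂, x ≤ x' → gd x x₂ ≤ gd x' x₂) ∧
  (∀ x x' x₁, x ≤ x' → gd x₁ x' ≤ gd x₁ x)

open Finset Filter
open scoped ENNReal NNReal

section AuxiliaryLemmas

attribute [local instance] Matrix.linftyOpNormedAddCommGroup Matrix.linftyOpNormedSpace
  Matrix.linftyOpNormedRing Matrix.linftyOpNormedAlgebra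

variable {n : ℕ}


/-- entry evaluation as a linear map -/
def entryLM (i j : Fin n) : Matrix (Fin n) (Fin n) ℝ →ₗ[ℝ] ℝ where
  toFun X := X i j
  map_add' _ _ := rfl
  map_smul' _ _ := rfl

lemma hasSum_entry {f : ℕ → Matrix (Fin n) (Fin n) ℝ} {S : Matrix (Fin n) (Fin n) ℝ}
    (hS : HasSum f S) (i j : Fin n) : HasSum (fun k => f k i j) (S i j) :=
  hS.map (entryLM i j).toAddMonoidHom (entryLM i j).continuous_of_finiteDimensional

lemma tsum_entry_nonneg {f : ℕ → Matrix (Fin n) (Fin n) ℝ} {S : Matrix (Fin n) (Fin n) ℝ}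
    (hS : HasSum f S) (h : ∀ k i j, 0 ≤ f k i j) (i j : Fin n) : 0 ≤ S i j :=
  hasSum_le (fun k => h k i j) hasSum_zero (hasSum_entry hS i j)

lemma mul_entries_nonneg {X Y : Matrix (Fin n) (Fin n) ℝ} (hX : ∀ i j, 0 ≤ X i j)
    (hY : ∀ i j, 0 ≤ Y i j) : ∀ i j, 0 ≤ (X * Y) i j := fun i j => by
  rw [Matrix.mul_apply]
  exact Finset.sum_nonneg fun k _ => mul_nonneg (hX i k) (hY k j)

lemma pow_entries_nonneg {X : Matrix (Fin n) (Fin n) ℝ} (hX : ∀ i j, 0 ≤ X i j) :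
    ∀ (m : ℕ) (i j : Fin n), 0 ≤ (X ^ m) i j := by
  intro m
  induction m with
  | zero => intro i j; simp [Matrix.one_apply]; split <;> norm_num
  | succ m ih => simpa [pow_succ] using mul_entries_nonneg ih hX

lemma inv_entries_nonneg (B : Matrix (Fin n) (Fin n) ℝ) (hB : ∀ i j, 0 ≤ B i j)
    {k : ℕ} (hk : 0 < k) (hnorm : ‖B ^ k‖ < 1) :
    ∃ N : Matrix (Fin n) (Fin n) ℝ, (∀ i j, 0 ≤ N i j) ∧ (1 - B) * N = 1 ∧ N * (1 - B) = 1 := by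
  set C := B ^ k with hC
  set u : (Matrix (Fin n) (Fin n) ℝ)ˣ := Units.oneSub C hnorm with hu
  have hSsum : HasSum (fun m => C ^ m) ((u⁻¹ : _ˣ) : Matrix (Fin n) (Fin n) ℝ) := by
    have h0 := hasSum_geom_series_inverse C hnorm
    have he : (1 - C : Matrix (Fin n) (Fin n) ℝ) = (u : Matrix (Fin n) (Fin n) ℝ) :=
      (Units.val_oneSub _ _).symm
    rwa [he, Ring.inverse_unit] at h0
  set S : Matrix (Fin n) (Fin n) ℝ := ((u⁻¹ : _ˣ) : Matrix (Fin n) (Fin n) ℝ) with hS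
  have hSnn : ∀ i j, 0 ≤ S i j :=
    tsum_entry_nonneg hSsum (fun m => pow_entries_nonneg (pow_entries_nonneg hB k) m)
  set P : Matrix (Fin n) (Fin n) ℝ := ∑ i ∈ Finset.range k, B ^ i with hP
  have hPnn : ∀ i j, 0 ≤ P i j := fun i j => by
    rw [hP, Matrix.sum_apply]
    exact Finset.sum_nonneg fun m _ => pow_entries_nonneg hB m i j
  have hcomm : Commute (1 - B) S := by
    have h1 : Commute (1 - B) (u : Matrix (Fin n) (Fin n) ℝ) := by
      rw [hu, Units.val_oneSub]
      exact (Commute.one_right _).sub_right ((Commute.one_left _).sub_left (Commute.pow_right rfl k))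
    exact h1.units_inv_right
  have hgeom : (1 - B) * P = 1 - C := by rw [hP, mul_neg_geom_sum]
  have hgeom' : P * (1 - B) = 1 - C := by rw [hP, geom_sum_mul_neg]
  have huval : (u : Matrix (Fin n) (Fin n) ℝ) = 1 - C := Units.val_oneSub _ _
  refine ⟨P * S, fun i j => mul_entries_nonneg hPnn hSnn i j, ?_, ?_⟩
  · calc (1 - B) * (P * S) = ((1 - B) * P) * S := by rw [mul_assoc]
      _ = (1 - C) * S := by rw [hgeom]
      _ = 1 := by rw [← huval, hS, Units.mul_inv]
  · calc (P * S) * (1 - B) = P * (S * (1 - B)) := by rw [mul_assoc]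
      _ = P * ((1 - B) * S) := by rw [hcomm.eq]
      _ = (P * (1 - B)) * S := by rw [mul_assoc]
      _ = 1 := by rw [hgeom', ← huval, hS, Units.mul_inv]


/-- A real matrix and its complexification have the same (linfty op) norm. -/
lemma norm_map_complex (X : Matrix (Fin n) (Fin n) ℝ) :
    ‖X.map (algebraMap ℝ ℂ)‖ = ‖X‖ := by
  rw [Matrix.linfty_opNorm_def, Matrix.linfty_opNorm_def]
  congr 1
  refine Finset.sup_congr rfl fun i _ => Finset.sum_congr rfl fun j _ => ?_
  simp [Matrix.map_apply]

lemma spectrum_shift (M : Matrix (Fin n) (Fin n) ℝ) (α : ℝ) :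
    spectrum ℂ ((M + α • (1 : Matrix (Fin n) (Fin n) ℝ)).map (algebraMap ℝ ℂ))
      = (fun ν => (α : ℂ) + ν) '' spectrum ℂ (M.map (algebraMap ℝ ℂ)) := by
  have hmap : (M + α • (1 : Matrix (Fin n) (Fin n) ℝ)).map (algebraMap ℝ ℂ)
      = algebraMap ℂ (Matrix (Fin n) (Fin n) ℂ) (α : ℂ) + M.map (algebraMap ℝ ℂ) := by
    ext i j
    by_cases h : i = j <;>
      simp [Matrix.map_apply, Matrix.add_apply, Matrix.smul_apply, Matrix.one_apply, h,
        Matrix.algebraMap_matrix_apply, add_comm]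
  rw [hmap, ← spectrum.singleton_add_eq]
  ext μ
  simp [Set.mem_add, Set.singleton_add]


lemma lyap_tendsto (hn : 0 < n) (M : Matrix (Fin n) (Fin n) ℝ) (v : Fin n → ℝ)
    (hv : ∀ i, 0 < v i) (hvM : ∀ j, ∑ i, v i * M i j = -1)
    (ε ε' : ℝ → Fin n → ℝ)
    (hderiv : ∀ t ≥ (0 : ℝ), HasDerivAt ε (ε' t) t)
    (hpos : ∀ t ≥ (0 : ℝ), 0 ≤ ε t)
    (hcomp : ∀ t ≥ (0 : ℝ), ε' t ≤ M.mulVec (ε t)) :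
    Filter.Tendsto ε Filter.atTop (nhds 0) := by
  have hne : (Finset.univ : Finset (Fin n)).Nonempty := ⟨⟨0, hn⟩, Finset.mem_univ _⟩
  set c : ℝ := Finset.univ.sup' hne v with hcdef
  have hvc : ∀ i, v i ≤ c := fun i => Finset.le_sup' v (Finset.mem_univ i)
  have hc : 0 < c := lt_of_lt_of_le (hv ⟨0, hn⟩) (hvc _)
  set V : ℝ → ℝ := fun t => ∑ i, v i * ε t i with hVdef
  set V' : ℝ → ℝ := fun t => ∑ i, v i * ε' t i with hV'def
  have hVd : ∀ t ≥ (0:ℝ), HasDerivAt V (V' t) t := fun t ht =>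
    HasDerivAt.fun_sum fun i _ => ((hasDerivAt_pi.mp (hderiv t ht)) i).const_mul (v i)
  have hVpos : ∀ t ≥ (0:ℝ), 0 ≤ V t := fun t ht =>
    Finset.sum_nonneg fun i _ => mul_nonneg (hv i).le (hpos t ht i)
  have hsum : ∀ t ≥ (0:ℝ), V t ≤ c * ∑ j, ε t j := by
    intro t ht
    rw [Finset.mul_sum]
    exact Finset.sum_le_sum fun i _ => mul_le_mul_of_nonneg_right (hvc i) (hpos t ht i)
  have hV'le : ∀ t ≥ (0:ℝ), V' t ≤ -(1/c) * V t := by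
    intro t ht
    have h1 : V' t ≤ ∑ i, v i * M.mulVec (ε t) i :=
      Finset.sum_le_sum fun i _ => mul_le_mul_of_nonneg_left (hcomp t ht i) (hv i).le
    have h2 : ∑ i, v i * M.mulVec (ε t) i = -∑ j, ε t j := by
      have e1 : ∀ i, v i * M.mulVec (ε t) i = ∑ j, v i * M i j * ε t j := fun i => by
        simp [Matrix.mulVec, dotProduct, Finset.mul_sum, mul_assoc]
      rw [Finset.sum_congr rfl fun i _ => e1 i, Finset.sum_comm]
      have e2 : ∀ j, ∑ i, v i * M i j * ε t j = -ε t j := fun j => by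
        rw [← Finset.sum_mul, hvM j, neg_one_mul]
      rw [Finset.sum_congr rfl fun j _ => e2 j, Finset.sum_neg_distrib]
    have h3 : (1/c) * V t ≤ ∑ j, ε t j := by
      rw [one_div, inv_mul_le_iff₀ hc]  -- (1/c) * V ≤ S ↔ V ≤ c * S ?
      exact hsum t ht
    linarith [h1, h2 ▸ h1]
  -- the function V t * exp (t/c) is antitone on [0, ∞)
  set g : ℝ → ℝ := fun t => V t * Real.exp (t / c) with hgdef
  have hgd : ∀ t ≥ (0:ℝ), HasDerivAt g (V' t * Real.exp (t/c) + V t * (Real.exp (t/c) * (1/c))) t := by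
    intro t ht
    have hexp : HasDerivAt (fun s : ℝ => Real.exp (s / c)) (Real.exp (t/c) * (1/c)) t := by
      have h1 : HasDerivAt (fun s : ℝ => s / c) (1/c) t := by
        simpa using (hasDerivAt_id t).div_const c
      exact (Real.hasDerivAt_exp (t/c)).comp t h1
    exact (hVd t ht).mul hexp
  have hganti : AntitoneOn g (Set.Ici (0:ℝ)) := by
    apply antitoneOn_of_deriv_nonpos (convex_Ici 0)
    · exact fun t ht => ((hVd t ht).continuousAt.continuousWithinAt).mul
        ((Real.continuous_exp.comp (continuous_id.div_const c)).continuousWithinAt)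
    · intro t ht
      rw [interior_Ici] at ht
      exact (hgd t (le_of_lt ht)).differentiableAt.differentiableWithinAt
    · intro t ht
      rw [interior_Ici] at ht
      have ht' := le_of_lt (Set.mem_Ioi.mp ht)
      rw [(hgd t ht').deriv]
      have h1 := hV'le t ht'
      have h2 := hVpos t ht'
      have h3 := Real.exp_pos (t/c)
      have hc' := hc
      nlinarith [mul_le_mul_of_nonneg_right h1 h3.le]
  have hVle : ∀ t ≥ (0:ℝ), V t ≤ V 0 * Real.exp (-(t/c)) := by
    intro t ht
    have h0 : g t ≤ g 0 := hganti (Set.self_mem_Ici) ht ht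
    have h1 : V t * Real.exp (t/c) ≤ V 0 := by simpa [hgdef] using h0
    have h2 := mul_le_mul_of_nonneg_right h1 (Real.exp_pos (-(t/c))).le
    rwa [mul_assoc, ← Real.exp_add, add_neg_cancel, Real.exp_zero, mul_one] at h2
  have hdecay : Tendsto (fun t : ℝ => V 0 * Real.exp (-(t/c))) atTop (nhds 0) := by
    have h1 : Tendsto (fun t : ℝ => -(t/c)) atTop atBot :=
      tendsto_neg_atTop_atBot.comp (tendsto_id.atTop_div_const hc)
    simpa using (Real.tendsto_exp_atBot.comp h1).const_mul (V 0)
  have hVtend : Tendsto V atTop (nhds 0) := by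
    apply squeeze_zero' (g := fun t => V 0 * Real.exp (-(t/c)))
    · filter_upwards [eventually_ge_atTop (0:ℝ)] with t ht using hVpos t ht
    · filter_upwards [eventually_ge_atTop (0:ℝ)] with t ht using hVle t ht
    · exact hdecay
  rw [tendsto_pi_nhds]
  intro i
  have hup : ∀ t ≥ (0:ℝ), ε t i ≤ (1 / v i) * V t := by
    intro t ht
    have h1 : v i * ε t i ≤ V t :=
      Finset.single_le_sum (fun j _ => mul_nonneg (hv j).le (hpos t ht j)) (Finset.mem_univ i)
    have h2 := mul_le_mul_of_nonneg_left h1 (inv_pos.mpr (hv i)).le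
    rw [one_div]
    calc ε t i = (v i)⁻¹ * (v i * ε t i) := by rw [← mul_assoc, inv_mul_cancel₀ (hv i).ne', one_mul]
      _ ≤ (v i)⁻¹ * V t := h2
  have : Tendsto (fun t => (1 / v i) * V t) atTop (nhds 0) := by
    simpa using hVtend.const_mul (1 / v i)
  simp only [Pi.zero_apply]
  apply squeeze_zero' (g := fun t => (1 / v i) * V t)
  · filter_upwards [eventually_ge_atTop (0:ℝ)] with t ht using hpos t ht i
  · filter_upwards [eventually_ge_atTop (0:ℝ)] with t ht using hup t ht
  · exact this
lemma exists_lyap (hn : 0 < n) (M : Matrix (Fin n) (Fin n) ℝ) (hMetz : Metzler M)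
    (hHurwitz : ∀ μ ∈ spectrum ℂ (M.map (algebraMap ℝ ℂ)), μ.re < 0) :
    ∃ v : Fin n → ℝ, (∀ i, 0 < v i) ∧ ∀ j, (∑ i, v i * M i j) = -1 := by
  haveI : Nontrivial (Matrix (Fin n) (Fin n) ℂ) := by
    refine ⟨0, 1, fun h => ?_⟩
    have h0 := congrFun (congrFun h ⟨0, hn⟩) ⟨0, hn⟩
    simp [Matrix.one_apply] at h0
  set Mc := M.map (algebraMap ℝ ℂ) with hMc
  have hne : (spectrum ℂ Mc).Nonempty := spectrum.nonempty Mc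
  have hcpt : IsCompact (spectrum ℂ Mc) := spectrum.isCompact Mc
  -- δ : uniform spectral gap
  obtain ⟨μ₀, hμ₀mem, hμ₀max⟩ := hcpt.exists_isMaxOn hne Complex.continuous_re.continuousOn
  set δ : ℝ := -μ₀.re with hδdef
  have hδ : 0 < δ := by simpa [hδdef] using hHurwitz μ₀ hμ₀mem
  have hre : ∀ μ ∈ spectrum ℂ Mc, μ.re ≤ -δ := fun μ hμ => by
    simpa [hδdef] using hμ₀max hμ
  clear_value δ
  -- R : bound on spectrum
  obtain ⟨μ₁, hμ₁mem, hμ₁max⟩ := hcpt.exists_isMaxOn hne continuous_norm.continuousOn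
  set R : ℝ := ‖μ₁‖ with hRdef
  have hR0 : 0 ≤ R := norm_nonneg _
  have hRb : ∀ μ ∈ spectrum ℂ Mc, ‖μ‖ ≤ R := fun μ hμ => hμ₁max hμ
  clear_value R
  -- choose α
  have hneF : (Finset.univ : Finset (Fin n)).Nonempty := ⟨⟨0, hn⟩, Finset.mem_univ _⟩
  set d : ℝ := Finset.univ.sup' hneF (fun i => max (-(M i i)) 0) with hddef
  have hdi : ∀ i, -(M i i) ≤ d := fun i =>
    le_trans (le_max_left _ _) (Finset.le_sup' (fun i => max (-(M i i)) 0) (Finset.mem_univ i))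
  have hd0 : 0 ≤ d :=
    le_trans (le_max_right _ _) (Finset.le_sup' (fun i => max (-(M i i)) 0) (Finset.mem_univ ⟨0, hn⟩))
  clear_value d
  have hq0 : 0 ≤ R * R / (2 * δ) := by positivity
  set α : ℝ := 1 + R * R / (2 * δ) + d with hαdef
  have hα : 0 < α := by positivity
  have hαd : ∀ i, -(M i i) ≤ α := by
    intro i
    have h1 := hdi i
    have h3 : d ≤ α := hαdef ▸ le_add_of_nonneg_left (by positivity)
    linarith
  have h2αδ : R * R < 2 * α * δ := by
    have h1 : 2 * α * δ = 2 * δ + R * R + 2 * δ * d := by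
      rw [hαdef]; field_simp
    nlinarith
  clear_value α
  -- the shifted matrix A = M + αI
  set A : Matrix (Fin n) (Fin n) ℝ := M + α • (1 : Matrix (Fin n) (Fin n) ℝ) with hAdef
  have hAnn : ∀ i j, 0 ≤ A i j := by
    intro i j
    by_cases h : i = j
    · subst h
      have h1 := hαd i
      simp only [hAdef, Matrix.add_apply, Matrix.smul_apply, Matrix.one_apply_eq, smul_eq_mul,
        mul_one]
      linarith
    · simpa [hAdef, Matrix.add_apply, Matrix.smul_apply, Matrix.one_apply, h] using hMetz i j h
  set Ac := A.map (algebraMap ℝ ℂ) with hAc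
  set s : ℝ := Real.sqrt (R * R - 2 * α * δ + α * α) with hsdef
  have hs0 : 0 ≤ s := Real.sqrt_nonneg _
  have hssq : s * s = R * R - 2 * α * δ + α * α → True := fun _ => trivial
  have hsα : s < α := by
    rw [hsdef, Real.sqrt_lt' hα]
    nlinarith
  have hbound : ∀ μ ∈ spectrum ℂ Ac, ‖μ‖ ≤ s := by
    intro μ hμ
    rw [hAc, hAdef, spectrum_shift] at hμ
    obtain ⟨ν, hν, rfl⟩ := hμ
    have hre' := hre ν hν
    have hRb' := hRb ν hν
    have hz : ‖(α:ℂ) + ν‖ ^ 2 = (α + ν.re) ^ 2 + ν.im ^ 2 := by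
      rw [Complex.sq_norm, Complex.normSq_apply]
      simp only [Complex.add_re, Complex.add_im, Complex.ofReal_re, Complex.ofReal_im, zero_add]
      ring
    have hz2 : ‖ν‖ ^ 2 = ν.re ^ 2 + ν.im ^ 2 := by
      rw [Complex.sq_norm, Complex.normSq_apply]; ring
    have hK : ‖(α:ℂ) + ν‖ ^ 2 ≤ R * R - 2 * α * δ + α * α := by
      nlinarith [norm_nonneg ν, hα]
    have h2 := Real.sqrt_le_sqrt hK
    rw [Real.sqrt_sq (norm_nonneg _)] at h2
    rw [hsdef]
    exact h2
  set r : NNReal := ⟨(s + α) / 2, by positivity⟩ with hrdef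
  have hrα : (r : ℝ) < α := by
    simp only [hrdef, NNReal.coe_mk]
    change (s + α) / 2 < α
    linarith
  have hr0 : (0:ℝ) ≤ r := r.2
  have hlt : ∀ μ ∈ spectrum ℂ Ac, ‖μ‖₊ < r := by
    intro μ hμ
    have h1 := hbound μ hμ
    rw [← NNReal.coe_lt_coe, coe_nnnorm]
    simp only [hrdef, NNReal.coe_mk]
    change ‖μ‖ < (s + α) / 2
    linarith
  have hρ : spectralRadius ℂ Ac < (r : ℝ≥0∞) := spectrum.spectralRadius_lt_of_forall_lt Ac hlt
  have hgel := spectrum.pow_nnnorm_pow_one_div_tendsto_nhds_spectralRadius Ac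
  have hev := hgel.eventually_lt_const hρ
  obtain ⟨k, hk1, hklt⟩ := ((Filter.eventually_ge_atTop 1).and hev).exists
  have hk0 : 0 < k := hk1
  have hkn : (k : ℝ) ≠ 0 := (Nat.cast_pos.mpr hk0).ne'
  have h1 : ((‖Ac ^ k‖₊ : ℝ≥0∞) ^ (1 / (k:ℝ))) ^ (k:ℝ) < (r : ℝ≥0∞) ^ (k:ℝ) :=
    ENNReal.rpow_lt_rpow hklt (by positivity)
  rw [← ENNReal.rpow_mul, one_div, inv_mul_cancel₀ hkn, ENNReal.rpow_one,
    ENNReal.rpow_natCast, ← ENNReal.coe_pow] at h1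
  have h2 : ‖Ac ^ k‖₊ < r ^ k := ENNReal.coe_lt_coe.mp h1
  have h3 : ‖Ac ^ k‖ < (r:ℝ) ^ k := by
    have := NNReal.coe_lt_coe.mpr h2
    rwa [coe_nnnorm, NNReal.coe_pow] at this
  have hAk : ‖A ^ k‖ < α ^ k := by
    have hmap : Ac ^ k = (A ^ k).map (algebraMap ℝ ℂ) := by
      rw [hAc, ← RingHom.mapMatrix_apply, ← RingHom.mapMatrix_apply, ← map_pow]
    calc ‖A ^ k‖ = ‖Ac ^ k‖ := by rw [hmap, norm_map_complex]
      _ < (r:ℝ) ^ k := h3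
      _ ≤ α ^ k := pow_le_pow_left₀ hr0 hrα.le k
  set B := α⁻¹ • A with hBdef
  have hBnn : ∀ i j, 0 ≤ B i j := fun i j => by
    have : B i j = α⁻¹ * A i j := rfl
    rw [this]
    exact mul_nonneg (inv_nonneg.mpr hα.le) (hAnn i j)
  have hBk : ‖B ^ k‖ < 1 := by
    rw [hBdef, smul_pow, norm_smul, Real.norm_eq_abs, abs_pow, abs_of_pos (inv_pos.mpr hα)]
    have hαk : (0:ℝ) < α ^ k := pow_pos hα k
    rw [inv_pow]
    have h6 := mul_lt_mul_of_pos_left hAk (inv_pos.mpr hαk)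
    rwa [inv_mul_cancel₀ hαk.ne'] at h6
  obtain ⟨N, hNnn, hN1, hN2⟩ := inv_entries_nonneg B hBnn hk0 hBk
  have hMB : -M = α • ((1 : Matrix (Fin n) (Fin n) ℝ) - B) := by
    rw [smul_sub, hBdef, smul_smul, mul_inv_cancel₀ hα.ne', one_smul, hAdef]
    ext i j
    simp only [Matrix.neg_apply, Matrix.sub_apply, Matrix.add_apply, Matrix.smul_apply,
      smul_eq_mul]
    ring
  set W := α⁻¹ • N with hWdef
  have hWnn : ∀ i j, 0 ≤ W i j := fun i j => by
    have : W i j = α⁻¹ * N i j := rfl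
    rw [this]
    exact mul_nonneg (inv_nonneg.mpr hα.le) (hNnn i j)
  have hMW : (-M) * W = 1 := by
    rw [hMB, hWdef, smul_mul_assoc, mul_smul_comm, smul_smul, mul_inv_cancel₀ hα.ne', one_smul,
      hN1]
  have hWM : W * (-M) = 1 := by
    rw [hMB, hWdef, smul_mul_assoc, mul_smul_comm, smul_smul, inv_mul_cancel₀ hα.ne', one_smul,
      hN2]
  refine ⟨fun j => ∑ i, W i j, ?_, ?_⟩
  · intro j
    have hge : 0 ≤ ∑ i, W i j := Finset.sum_nonneg fun i _ => hWnn i j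
    rcases hge.lt_or_eq with h | h
    · exact h
    · exfalso
      have hall : ∀ i ∈ Finset.univ, W i j = 0 :=
        (Finset.sum_eq_zero_iff_of_nonneg (fun i _ => hWnn i j)).mp h.symm
      have h11 : ((-M) * W) j j = 0 := by
        rw [Matrix.mul_apply]
        exact Finset.sum_eq_zero fun l _ => by rw [hall l (Finset.mem_univ l), mul_zero]
      rw [hMW] at h11
      simp [Matrix.one_apply] at h11
  · intro j
    have hWMM : W * M = -1 := by
      have h5 : W * (-M) = 1 := hWM
      rw [Matrix.mul_neg, neg_eq_iff_eq_neg] at h5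
      exact h5
    calc ∑ i, (∑ l, W l i) * M i j = ∑ i, ∑ l, W l i * M i j := by
          refine Finset.sum_congr rfl fun i _ => ?_
          rw [Finset.sum_mul]
      _ = ∑ l, ∑ i, W l i * M i j := Finset.sum_comm
      _ = ∑ l, (W * M) l j := by
          refine Finset.sum_congr rfl fun l _ => ?_
          rw [Matrix.mul_apply]
      _ = ∑ l, (-1 : Matrix (Fin n) (Fin n) ℝ) l j := by rw [hWMM]
      _ = -1 := by
          simp [Matrix.neg_apply, Matrix.one_apply]

end AuxiliaryLemmas

/-- continuous-time positive comparison principle. -/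
theorem statement19 {n : ℕ} (M : Matrix (Fin n) (Fin n) ℝ)
    (hMetz : Metzler M)
    -- Hurwitz: every (complex) eigenvalue of M has strictly negative real part
    (hHurwitz : ∀ μ ∈ spectrum ℂ (M.map (algebraMap ℝ ℂ)), μ.re < 0)
    (ε ε' : ℝ → Fin n → ℝ)
    (hderiv : ∀ t ≥ (0 : ℝ), HasDerivAt ε (ε' t) t)
    (hpos : ∀ t ≥ (0 : ℝ), 0 ≤ ε t)
    (hcomp : ∀ t ≥ (0 : ℝ), ε' t ≤ M.mulVec (ε t)) :
    Filter.Tendsto ε Filter.atTop (nhds 0) := by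
  rcases Nat.eq_zero_or_pos n with hn | hn
  · subst hn
    have hε : ε = fun _ => 0 := funext fun t => Subsingleton.elim _ _
    rw [hε]
    exact tendsto_const_nhds
  · obtain ⟨v, hv, hvM⟩ := exists_lyap hn M hMetz hHurwitz
    exact lyap_tendsto hn M v hv hvM ε ε' hderiv hpos hcomp
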